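/- arXiv:2501.04576 — 2 statements merged into one kernel-verified Lean document; each statement's English description precedes it below -/
import Mathlib

section
/- Let h : ℝ → ℝ be a continuous 2π-periodic even function with ∫_{-π}^{π} h(θ)cos θ dθ = 0, and let C₁, C₂ ∈ ℝ, γ > 0, R₀ > 0, β > 0. Then there exist a 2π-periodic C² even function ρ and p₁ ∈ ℝ such that -γ(ρ + ρ'')/R₀² - β∫_{-π}^{π} ρ(θ)dθ - p₁ = h on ℝ, together with ∫_{-π}^{π} ρ(θ)dθ = C₁ and ∫_{-π}^{π} ρ(θ)cos θ dθ = C₂. -/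
open Real

open intervalIntegral


lemma odd_int (f : ℝ → ℝ) (hodd : ∀ x, f (-x) = - f x) (hf : Continuous f) :
    ∫ x in (-π)..π, f x = 0 := by
  have h1 : ∫ x in (0:ℝ)..π, f (-x) = ∫ x in (-π)..(0:ℝ), f x := by
    simpa using integral_comp_neg (a := 0) (b := π) f
  have h2 : ∫ x in (0:ℝ)..π, f (-x) = - ∫ x in (0:ℝ)..π, f x := by
    simp only [hodd]; exact integral_neg
  rw [← integral_add_adjacent_intervals (a := -π) (b := 0) (c := π)
    (hf.intervalIntegrable _ _) (hf.intervalIntegrable _ _), ← h1, h2]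
  ring

lemma even_int (f : ℝ → ℝ) (heven : ∀ x, f (-x) = f x) (hf : Continuous f) :
    ∫ x in (-π)..π, f x = 2 * ∫ x in (0:ℝ)..π, f x := by
  have h1 : ∫ x in (0:ℝ)..π, f (-x) = ∫ x in (-π)..(0:ℝ), f x := by
    simpa using integral_comp_neg (a := 0) (b := π) f
  have h2 : ∫ x in (0:ℝ)..π, f (-x) = ∫ x in (0:ℝ)..π, f x := by
    simp only [heven]
  rw [← integral_add_adjacent_intervals (a := -π) (b := 0) (c := π)
    (hf.intervalIntegrable _ _) (hf.intervalIntegrable _ _), ← h1, h2]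
  ring

/-- Variation-of-parameters solution of `P'' + P = g` for even periodic `g` with
`∫ g cos = 0` over a period. -/
lemma key (g : ℝ → ℝ) (hg : Continuous g) (hgper : Function.Periodic g (2*π))
    (hgeven : ∀ θ, g (-θ) = g θ) (hgcos : ∫ θ in (-π)..π, g θ * Real.cos θ = 0) :
    ∃ P : ℝ → ℝ, ContDiff ℝ 2 P ∧ Differentiable ℝ P ∧ Differentiable ℝ (deriv P) ∧
      Function.Periodic P (2*π) ∧ (∀ θ, P (-θ) = P θ) ∧
      (∀ θ, deriv (deriv P) θ = g θ - P θ) ∧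
      (∫ θ in (-π)..π, P θ) = ∫ θ in (-π)..π, g θ := by
  set u : ℝ → ℝ := fun θ => ∫ t in (0:ℝ)..θ, g t * Real.sin t with hu_def
  set v : ℝ → ℝ := fun θ => ∫ t in (0:ℝ)..θ, g t * Real.cos t with hv_def
  set P : ℝ → ℝ := fun θ => -Real.cos θ * u θ + Real.sin θ * v θ with hP_def
  set Q : ℝ → ℝ := fun θ => Real.sin θ * u θ + Real.cos θ * v θ with hQ_def
  have hgs : Continuous fun t => g t * Real.sin t := hg.mul continuous_sin
  have hgc : Continuous fun t => g t * Real.cos t := hg.mul continuous_cos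
  have hu : ∀ θ, HasDerivAt u (g θ * Real.sin θ) θ := fun θ =>
    integral_hasDerivAt_right (hgs.intervalIntegrable _ _)
      hgs.aestronglyMeasurable.stronglyMeasurableAtFilter hgs.continuousAt
  have hv : ∀ θ, HasDerivAt v (g θ * Real.cos θ) θ := fun θ =>
    integral_hasDerivAt_right (hgc.intervalIntegrable _ _)
      hgc.aestronglyMeasurable.stronglyMeasurableAtFilter hgc.continuousAt
  have hP : ∀ θ, HasDerivAt P (Q θ) θ := by
    intro θ
    have h1 := ((Real.hasDerivAt_cos θ).neg.mul (hu θ))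
    have h2 := ((Real.hasDerivAt_sin θ).mul (hv θ))
    have h3 := h1.add h2
    convert h3 using 1
    show Q θ = _
    simp only [hQ_def, Pi.neg_apply]
    ring
    all_goals rfl
  have hQ : ∀ θ, HasDerivAt Q (g θ - P θ) θ := by
    intro θ
    have h1 := ((Real.hasDerivAt_sin θ).mul (hu θ))
    have h2 := ((Real.hasDerivAt_cos θ).mul (hv θ))
    have h3 := h1.add h2
    convert h3 using 1
    show g θ - P θ = _
    simp only [hP_def]
    linear_combination (- g θ) * (Real.sin_sq_add_cos_sq θ)
    all_goals rfl
  have hdP : deriv P = Q := funext fun θ => (hP θ).deriv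
  have hdQ : deriv Q = fun θ => g θ - P θ := funext fun θ => (hQ θ).deriv
  have hPdiff : Differentiable ℝ P := fun θ => (hP θ).differentiableAt
  have hQdiff : Differentiable ℝ Q := fun θ => (hQ θ).differentiableAt
  have hPcont : Continuous P := hPdiff.continuous
  have hQ1 : ContDiff ℝ 1 Q := contDiff_one_iff_deriv.2 ⟨hQdiff, by
    rw [hdQ]; exact hg.sub hPcont⟩
  have hP2 : ContDiff ℝ 2 P := by
    rw [show (2 : WithTop ℕ∞) = 1 + 1 by norm_num, contDiff_succ_iff_deriv]
    refine ⟨hPdiff, by simp, by rw [hdP]; exact hQ1⟩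
  -- periodicity of u and v
  have hgsper : Function.Periodic (fun t => g t * Real.sin t) (2*π) := fun t => by
    simp [hgper t, Real.sin_add_two_pi]
  have hgcper : Function.Periodic (fun t => g t * Real.cos t) (2*π) := fun t => by
    simp [hgper t, Real.cos_add_two_pi]
  have hgs_odd : ∀ t, g (-t) * Real.sin (-t) = -(g t * Real.sin t) := fun t => by
    simp [hgeven t]
  have hgc_even : ∀ t, g (-t) * Real.cos (-t) = g t * Real.cos t := fun t => by
    simp [hgeven t]
  have huper : ∀ θ, u (θ + 2*π) = u θ := by
    intro θ
    have hsplit : u θ + ∫ t in θ..(θ + 2*π), g t * Real.sin t = u (θ + 2*π) :=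
      integral_add_adjacent_intervals (hgs.intervalIntegrable _ _) (hgs.intervalIntegrable _ _)
    have h2 : ∫ t in θ..(θ + 2*π), g t * Real.sin t
        = ∫ t in (-π)..(-π + 2*π), g t * Real.sin t := hgsper.intervalIntegral_add_eq θ (-π)
    have h3 : (-π + 2*π : ℝ) = π := by ring
    rw [h3] at h2
    have h4 : ∫ t in (-π)..π, g t * Real.sin t = 0 := odd_int _ hgs_odd hgs
    rw [h2, h4] at hsplit
    linarith
  have hvper : ∀ θ, v (θ + 2*π) = v θ := by
    intro θ
    have hsplit : v θ + ∫ t in θ..(θ + 2*π), g t * Real.cos t = v (θ + 2*π) :=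
      integral_add_adjacent_intervals (hgc.intervalIntegrable _ _) (hgc.intervalIntegrable _ _)
    have h2 : ∫ t in θ..(θ + 2*π), g t * Real.cos t
        = ∫ t in (-π)..(-π + 2*π), g t * Real.cos t := hgcper.intervalIntegral_add_eq θ (-π)
    have h3 : (-π + 2*π : ℝ) = π := by ring
    rw [h3] at h2
    rw [h2, hgcos] at hsplit
    linarith
  -- evenness of u, oddness of v
  have hueven : ∀ θ, u (-θ) = u θ := by
    intro θ
    have h1 : ∫ x in (0:ℝ)..θ, g (-x) * Real.sin (-x) = ∫ x in (-θ)..(0:ℝ), g x * Real.sin x := by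
      simpa using integral_comp_neg (a := 0) (b := θ) (fun t => g t * Real.sin t)
    have h2 : ∫ x in (0:ℝ)..θ, g (-x) * Real.sin (-x) = - u θ := by
      simp only [hgs_odd]; exact integral_neg
    have h3 : ∫ x in (-θ)..(0:ℝ), g x * Real.sin x = - u (-θ) := by
      rw [hu_def]; exact (integral_symm _ _)
    rw [h2, h3] at h1
    linarith
  have hvodd : ∀ θ, v (-θ) = - v θ := by
    intro θ
    have h1 : ∫ x in (0:ℝ)..θ, g (-x) * Real.cos (-x) = ∫ x in (-θ)..(0:ℝ), g x * Real.cos x := by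
      simpa using integral_comp_neg (a := 0) (b := θ) (fun t => g t * Real.cos t)
    have h2 : ∫ x in (0:ℝ)..θ, g (-x) * Real.cos (-x) = v θ := by
      simp only [hgc_even]; rfl
    have h3 : ∫ x in (-θ)..(0:ℝ), g x * Real.cos x = - v (-θ) := by
      rw [hv_def]; exact (integral_symm _ _)
    rw [h2, h3] at h1
    linarith
  have hPper : Function.Periodic P (2*π) := by
    intro θ
    simp only [hP_def, Real.cos_add_two_pi, Real.sin_add_two_pi, huper θ, hvper θ]
  have hPeven : ∀ θ, P (-θ) = P θ := by
    intro θ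
    simp only [hP_def, Real.cos_neg, Real.sin_neg, hueven θ, hvodd θ]
    ring
  -- v π = 0
  have hvpi : v π = 0 := by
    have h1 := even_int (fun t => g t * Real.cos t) hgc_even hgc
    rw [hgcos] at h1
    have : v π = ∫ t in (0:ℝ)..π, g t * Real.cos t := rfl
    rw [this]; linarith
  -- integral identity
  have hFTC : ∫ θ in (-π)..π, (g θ - P θ) = Q π - Q (-π) :=
    integral_deriv_eq_sub' Q hdQ (fun x _ => hQdiff x) ((hg.sub hPcont).continuousOn)
  have hQpi : Q π = 0 := by
    simp [hQ_def, Real.sin_pi, Real.cos_pi, hvpi]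
  have hQmpi : Q (-π) = 0 := by
    simp [hQ_def, Real.sin_neg, Real.cos_neg, Real.sin_pi, Real.cos_pi, hvodd π, hvpi]
  have hIP : (∫ θ in (-π)..π, P θ) = ∫ θ in (-π)..π, g θ := by
    rw [integral_sub (hg.intervalIntegrable _ _) (hPcont.intervalIntegrable _ _)] at hFTC
    rw [hQpi, hQmpi] at hFTC
    linarith
  exact ⟨P, hP2, hPdiff, by rw [hdP]; exact hQdiff, hPper, hPeven,
    fun θ => by rw [hdP, hdQ], hIP⟩

/-- Surjectivity part of the range characterization of the linearized operator:
for any continuous 2π-periodic even `h` with `∫ h cos = 0` and any `C₁, C₂`, there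
exist a 2π-periodic even `C²` function `ρ` and `p₁ ∈ ℝ` with
`-γ(ρ+ρ'')/R₀² - β ∫ρ - p₁ = h`, `∫ρ = C₁` and `∫ρ cos = C₂`. -/
theorem stmt4 (γ R₀ β C₁ C₂ : ℝ) (hγ : 0 < γ) (hR₀ : 0 < R₀) (hβ : 0 < β)
    (h : ℝ → ℝ) (hcont : Continuous h)
    (hper : Function.Periodic h (2 * π))
    (heven : ∀ θ, h (-θ) = h θ)
    (hint : ∫ θ in (-π)..π, h θ * Real.cos θ = 0) :
    ∃ (ρ : ℝ → ℝ) (p₁ : ℝ),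
      ContDiff ℝ 2 ρ ∧ Function.Periodic ρ (2 * π) ∧ (∀ θ, ρ (-θ) = ρ θ) ∧
      (∀ θ, -γ * (ρ θ + deriv (deriv ρ) θ) / R₀ ^ 2
          - β * (∫ θ' in (-π)..π, ρ θ') - p₁ = h θ) ∧
      (∫ θ in (-π)..π, ρ θ) = C₁ ∧
      (∫ θ in (-π)..π, ρ θ * Real.cos θ) = C₂ := by
  have hπ : (π : ℝ) ≠ 0 := Real.pi_ne_zero
  have hγ' : γ ≠ 0 := ne_of_gt hγ
  have hR' : (R₀:ℝ) ≠ 0 := ne_of_gt hR₀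
  set Ih : ℝ := ∫ θ in (-π)..π, h θ with hIh_def
  set c : ℝ := (-(γ/R₀^2) * C₁ - Ih)/(2*π) with hc_def
  set p₁ : ℝ := c - β * C₁ with hp_def
  set g : ℝ → ℝ := fun θ => -(R₀^2/γ) * (h θ + c) with hg_def
  have hg : Continuous g := by
    apply continuous_const.mul (hcont.add continuous_const)
  have hgper : Function.Periodic g (2*π) := fun θ => by
    simp only [hg_def, hper θ]
  have hgeven : ∀ θ, g (-θ) = g θ := fun θ => by
    simp only [hg_def, heven θ]
  have hintcos : (∫ θ in (-π)..π, Real.cos θ) = 0 := by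
    rw [integral_cos]; simp
  have hgcos : ∫ θ in (-π)..π, g θ * Real.cos θ = 0 := by
    have : ∀ θ, g θ * Real.cos θ = -(R₀^2/γ) * (h θ * Real.cos θ) + (-(R₀^2/γ) * c) * Real.cos θ := by
      intro θ; simp only [hg_def]; ring
    simp only [this]
    rw [integral_add (f := fun θ => -(R₀^2/γ) * (h θ * Real.cos θ)) (g := fun θ => (-(R₀^2/γ) * c) * Real.cos θ) ((continuous_const.mul (hcont.mul continuous_cos)).intervalIntegrable _ _)
      ((continuous_const.mul continuous_cos).intervalIntegrable _ _),
      intervalIntegral.integral_const_mul, intervalIntegral.integral_const_mul, hint, hintcos]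
    ring
  have hIg : (∫ θ in (-π)..π, g θ) = C₁ := by
    have : ∀ θ, g θ = -(R₀^2/γ) * h θ + (-(R₀^2/γ) * c) := by
      intro θ; simp only [hg_def]; ring
    simp only [this]
    rw [integral_add (f := fun θ => -(R₀^2/γ) * h θ) (g := fun _ => -(R₀^2/γ) * c) ((continuous_const.mul hcont).intervalIntegrable _ _)
      (intervalIntegrable_const), intervalIntegral.integral_const_mul, integral_const, ← hIh_def]
    rw [hc_def]
    have h2π : (π : ℝ) - (-π) = 2*π := by ring
    rw [h2π, smul_eq_mul]
    field_simp
    ring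
  obtain ⟨P, hP2, hPdiff, hdPdiff, hPper, hPeven, hPode, hIP⟩ := key g hg hgper hgeven hgcos
  have hPcont : Continuous P := hPdiff.continuous
  set IPc : ℝ := ∫ θ in (-π)..π, P θ * Real.cos θ with hIPc_def
  set A : ℝ := (C₂ - IPc)/π with hA_def
  set ρ : ℝ → ℝ := fun θ => P θ + A * Real.cos θ with hρ_def
  have hρ2 : ContDiff ℝ 2 ρ := hP2.add (contDiff_const.mul (Real.contDiff_cos.of_le le_top))
  have hρper : Function.Periodic ρ (2*π) := fun θ => by
    simp only [hρ_def, Real.cos_add_two_pi, hPper θ]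
  have hρeven : ∀ θ, ρ (-θ) = ρ θ := fun θ => by
    simp only [hρ_def, Real.cos_neg, hPeven θ]
  -- second derivative of ρ
  have hdρ : deriv ρ = fun θ => deriv P θ + A * (-Real.sin θ) := by
    funext θ
    rw [hρ_def]
    rw [deriv_fun_add (hPdiff θ) ((Real.differentiable_cos.const_mul A) θ)]
    congr 1
    rw [deriv_const_mul _ (Real.differentiable_cos θ), Real.deriv_cos]
  have hddρ : ∀ θ, deriv (deriv ρ) θ = g θ - ρ θ := by
    intro θ
    rw [hdρ]
    have hms : Differentiable ℝ (fun θ => A * (-Real.sin θ)) :=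
      (Real.differentiable_sin.neg.const_mul A)
    rw [deriv_fun_add (hdPdiff θ) (hms θ), hPode θ]
    have : deriv (fun θ => A * (-Real.sin θ)) θ = A * (-Real.cos θ) := by
      rw [deriv_const_mul (d := fun θ => -Real.sin θ) _ (Real.differentiable_sin.neg θ)]
      congr 1
      rw [deriv.fun_neg, Real.deriv_sin]
    rw [this, hρ_def]
    ring
  -- integrals
  have hIρ : (∫ θ in (-π)..π, ρ θ) = C₁ := by
    simp only [hρ_def]
    rw [integral_add (f := P) (g := fun θ => A * Real.cos θ) (hPcont.intervalIntegrable _ _)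
      ((continuous_const.mul continuous_cos).intervalIntegrable _ _),
      intervalIntegral.integral_const_mul, hintcos, hIP, hIg]
    ring
  have hIρc : (∫ θ in (-π)..π, ρ θ * Real.cos θ) = C₂ := by
    have : ∀ θ, ρ θ * Real.cos θ = P θ * Real.cos θ + A * Real.cos θ ^ 2 := by
      intro θ; simp only [hρ_def]; ring
    simp only [this]
    rw [integral_add (f := fun θ => P θ * Real.cos θ) (g := fun θ => A * Real.cos θ ^ 2) ((hPcont.mul continuous_cos).intervalIntegrable _ _)
      ((continuous_const.mul (continuous_cos.pow 2)).intervalIntegrable _ _),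
      intervalIntegral.integral_const_mul, integral_cos_sq, ← hIPc_def]
    simp [Real.sin_pi]
    rw [hA_def]
    field_simp
    ring
  refine ⟨ρ, p₁, hρ2, hρper, hρeven, ?_, hIρ, hIρc⟩
  intro θ
  rw [hddρ θ, hIρ]
  have : ρ θ + (g θ - ρ θ) = g θ := by ring
  rw [this, hg_def, hp_def]
  field_simp
  ring
end

section
/- Let a > 0, c⁰ > 0, R₀ > 0, and let f'_act(c⁰) > 0, i.e., let m > 0 be given (representing a c⁰ f'_act(c⁰) R₀). There is no 2π-periodic C² function ρ : ℝ → ℝ and real p₁, β such that γ(ρ+ρ'')/R₀² + β∫_{-π}^π ρ dθ + p₁ = m cos θ on ℝ together with ∫_{-π}^π ρ dθ = ∫_{-π}^π ρ cos θ dθ = ∫_{-π}^π ρ sin θ dθ = 0. -/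
open Real

/-- Transversality condition in the Crandall–Rabinowitz argument: for `γ, R₀, m > 0` there is
no 2π-periodic `C²` function `ρ` and reals `p₁, β` with
`γ(ρ+ρ'')/R₀² + β ∫ρ + p₁ = m cos θ` and `∫ρ = ∫ρ cos = ∫ρ sin = 0`. -/
theorem stmt6 (γ R₀ m : ℝ) (hγ : 0 < γ) (hR₀ : 0 < R₀) (hm : 0 < m) :
    ¬ ∃ (ρ : ℝ → ℝ) (p₁ β : ℝ),
      ContDiff ℝ 2 ρ ∧ Function.Periodic ρ (2 * π) ∧
      (∀ θ, γ * (ρ θ + deriv (deriv ρ) θ) / R₀ ^ 2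
          + β * (∫ θ' in (-π)..π, ρ θ') + p₁ = m * Real.cos θ) ∧
      (∫ θ in (-π)..π, ρ θ) = 0 ∧
      (∫ θ in (-π)..π, ρ θ * Real.cos θ) = 0 ∧
      (∫ θ in (-π)..π, ρ θ * Real.sin θ) = 0 := by
  rintro ⟨ρ, p₁, β, hC, hper, heq, hI0, hIc, hIs⟩
  have hC' : ContDiff ℝ 1 (deriv ρ) := by
    have h2 : ContDiff ℝ ((1:ℕ) + 1) ρ := by exact_mod_cast hC
    have := (contDiff_succ_iff_deriv.mp h2).2.2
    exact_mod_cast this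
  have hρdiff : Differentiable ℝ ρ := hC.differentiable (by norm_num)
  have hρ'diff : Differentiable ℝ (deriv ρ) := hC'.differentiable one_ne_zero
  have hρ''cont : Continuous (deriv (deriv ρ)) := hC'.continuous_deriv le_rfl
  have hper' : ∀ x : ℝ, deriv ρ (x + 2 * π) = deriv ρ x := by
    intro x
    have hfe : ρ = fun y => ρ (y + 2 * π) := by funext y; exact (hper y).symm
    have h1 : deriv (fun y => ρ (y + 2 * π)) x = deriv ρ (x + 2 * π) := by
      rw [deriv_comp_add_const]
    rw [← h1, ← hfe]
  -- derivative of F = ρ' cos + ρ sin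
  have hF : ∀ θ : ℝ, HasDerivAt (fun θ => deriv ρ θ * Real.cos θ + ρ θ * Real.sin θ)
      ((deriv (deriv ρ) θ + ρ θ) * Real.cos θ) θ := by
    intro θ
    have h1 : HasDerivAt (fun θ => deriv ρ θ * Real.cos θ + ρ θ * Real.sin θ) _ θ := ((hρ'diff θ).hasDerivAt.mul (Real.hasDerivAt_cos θ)).add
      ((hρdiff θ).hasDerivAt.mul (Real.hasDerivAt_sin θ))
    convert h1 using 1
    ring
  have hcont : Continuous fun θ => (deriv (deriv ρ) θ + ρ θ) * Real.cos θ :=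
    (hρ''cont.add hC.continuous).mul Real.continuous_cos
  have hint : (∫ θ in (-π)..π, (deriv (deriv ρ) θ + ρ θ) * Real.cos θ) = 0 := by
    rw [intervalIntegral.integral_eq_sub_of_hasDerivAt (fun θ _ => hF θ)
      (hcont.intervalIntegrable _ _)]
    have hpp : deriv ρ π = deriv ρ (-π) := by
      have := hper' (-π)
      rw [show -π + 2 * π = π by ring] at this
      exact this
    simp [Real.sin_pi, Real.cos_pi, hpp]
  have key : ∀ θ : ℝ, (deriv (deriv ρ) θ + ρ θ) * Real.cos θ
      = R₀ ^ 2 / γ * ((m * Real.cos θ - p₁) * Real.cos θ) := by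
    intro θ
    have h := heq θ
    rw [hI0, mul_zero, add_zero] at h
    have hγ' : γ ≠ 0 := hγ.ne'
    have hR' : R₀ ^ 2 ≠ 0 := (pow_pos hR₀ 2).ne'
    have hgoal : deriv (deriv ρ) θ + ρ θ = (m * Real.cos θ - p₁) * R₀ ^ 2 / γ := by
      field_simp at h ⊢
      linarith
    rw [hgoal]
    field_simp
  have hint2 : (∫ θ in (-π)..π, (deriv (deriv ρ) θ + ρ θ) * Real.cos θ)
      = R₀ ^ 2 / γ * (m * π) := by
    simp_rw [key]
    rw [intervalIntegral.integral_const_mul]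
    congr 1
    have hrw : ∀ θ : ℝ, (m * Real.cos θ - p₁) * Real.cos θ
        = m * Real.cos θ ^ 2 - p₁ * Real.cos θ := by intro θ; ring
    simp_rw [hrw]
    rw [intervalIntegral.integral_sub (f := fun x => m * Real.cos x ^ 2) (g := fun x => p₁ * Real.cos x)
        ((continuous_const.mul (Real.continuous_cos.pow 2)).intervalIntegrable _ _)
        ((continuous_const.mul Real.continuous_cos).intervalIntegrable _ _),
      intervalIntegral.integral_const_mul, intervalIntegral.integral_const_mul,
      integral_cos_sq, integral_cos]
    simp [Real.sin_pi]
    try ring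
  rw [hint] at hint2
  have hpos : 0 < R₀ ^ 2 / γ * (m * π) :=
    mul_pos (div_pos (pow_pos hR₀ 2) hγ) (mul_pos hm Real.pi_pos)
  linarith
end
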